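/- arXiv:2009.10112 — 2 statements merged into one kernel-verified Lean document; each statement's English description precedes it below -/
import Mathlib

section
/- Let R = ℤ[t]/(t²−1) and let 𝐩 ⊆ R be a prime ideal containing J = (t+1) with 𝐩 ≠ (t+1, 2). Then the localization I_𝐩 of the ideal I = (t−1) at 𝐩 is a free R_𝐩-module of rank 1. -/
open Polynomial
set_option synthInstance.maxHeartbeats 1000000
set_option maxHeartbeats 1000000

abbrev R : Type := ℤ[X] ⧸ Ideal.span ({X ^ 2 - 1} : Set ℤ[X])

noncomputable def t : R := Ideal.Quotient.mk _ X

noncomputable def phi : R →+* ZMod 2 :=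
  Ideal.Quotient.lift _ (eval₂RingHom (Int.castRingHom (ZMod 2)) 1) (by
    intro a ha
    rw [Ideal.mem_span_singleton] at ha
    obtain ⟨c, rfl⟩ := ha
    simp)

lemma phi_t : phi t = 1 := by
  simp [phi, t]

lemma phi_surj : Function.Surjective phi := by
  intro x
  fin_cases x
  · exact ⟨0, map_zero _⟩
  · exact ⟨1, map_one _⟩

lemma ker_phi : RingHom.ker phi = Ideal.span ({t + 1, 2} : Set R) := by
  apply le_antisymm
  · intro x hx
    obtain ⟨q, rfl⟩ := Ideal.Quotient.mk_surjective x
    have hx' : (phi (Ideal.Quotient.mk _ q) : ZMod 2) = 0 := hx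
    have hev : phi (Ideal.Quotient.mk _ q) = ((q.eval (-1) : ℤ) : ZMod 2) := by
      show eval₂ (Int.castRingHom (ZMod 2)) 1 q = _
      have h1 : (1 : ZMod 2) = (Int.castRingHom (ZMod 2)) (-1) := by decide
      rw [h1, Polynomial.eval₂_at_apply]
      rfl
    have h2 : (2 : ℤ) ∣ q.eval (-1) := by
      have := hev ▸ hx'
      exact_mod_cast (ZMod.intCast_zmod_eq_zero_iff_dvd _ 2).mp this
    have hdvd : (X - C (-1) : ℤ[X]) ∣ q - C (q.eval (-1)) := X_sub_C_dvd_sub_C_eval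
    obtain ⟨c, hc⟩ := hdvd
    have hq : (Ideal.Quotient.mk _ q : R)
        = (t + 1) * (Ideal.Quotient.mk _ c) + ((q.eval (-1) : ℤ) : R) := by
      have hq' : q = (X - C (-1)) * c + C (q.eval (-1)) := by linear_combination hc
      conv_lhs => rw [hq']
      have hC : ∀ n : ℤ, (Ideal.Quotient.mk (Ideal.span ({X ^ 2 - 1} : Set ℤ[X]))) (C n) = (n : R) :=
        fun n => by rw [show (C n : ℤ[X]) = (n : ℤ[X]) by simp, map_intCast]
      rw [map_add, map_mul, map_sub, hC, hC]
      rw [show ((Ideal.Quotient.mk (Ideal.span ({X ^ 2 - 1} : Set ℤ[X]))) X) = t from rfl]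
      push_cast
      ring
    rw [hq]
    apply Ideal.add_mem
    · exact Ideal.mul_mem_right _ _ (Ideal.subset_span (by simp))
    · obtain ⟨k, hk⟩ := h2
      rw [hk]
      push_cast
      exact Ideal.mul_mem_right _ _ (Ideal.subset_span (by simp))
  · rw [Ideal.span_le]
    rintro x (rfl | rfl)
    · simp only [RingHom.mem_ker, SetLike.mem_coe, map_add, phi_t, map_one]
      decide
    · simp only [RingHom.mem_ker, SetLike.mem_coe, map_ofNat]
      decide

lemma t_sq : (t + 1) * (t - 1) = 0 := by
  have : ((X : ℤ[X]) ^ 2 - 1) ∈ Ideal.span ({X ^ 2 - 1} : Set ℤ[X]) :=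
    Ideal.subset_span rfl
  have h0 : (Ideal.Quotient.mk (Ideal.span ({X ^ 2 - 1} : Set ℤ[X]))) (X ^ 2 - 1) = 0 :=
    (Ideal.Quotient.eq_zero_iff_mem).mpr this
  have : t ^ 2 - 1 = 0 := by
    rw [t, ← h0, map_sub, map_pow, map_one]
  linear_combination this

/-- If 𝐩 is a prime of R containing J = (t+1) with 𝐩 ≠ (t+1, 2), then the
localization I_𝐩 of I = (t−1) at 𝐩 is a free R_𝐩-module of rank 1,
i.e. isomorphic to R_𝐩. -/
theorem I_localized_free_rank_one (p : Ideal R) (hp : p.IsPrime)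
    (hJ : Ideal.span {t + 1} ≤ p) (hne : p ≠ Ideal.span {t + 1, 2}) :
    Nonempty ((LocalizedModule p.primeCompl (Ideal.span {t - 1} : Ideal R))
      ≃ₗ[Localization p.primeCompl] Localization p.primeCompl) := by
  have ht1 : t + 1 ∈ p := hJ (Ideal.mem_span_singleton_self _)
  have hmax : (Ideal.span ({t + 1, 2} : Set R)).IsMaximal := by
    rw [← ker_phi]
    exact RingHom.ker_isMaximal_of_surjective phi phi_surj
  have hsub : t - 1 ∉ p := by
    intro h
    have h2 : (2 : R) ∈ p := by
      have h2' := p.sub_mem ht1 h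
      rw [show t + 1 - (t - 1) = (2 : R) by ring] at h2'
      exact h2'
    have hle : Ideal.span ({t + 1, 2} : Set R) ≤ p := by
      rw [Ideal.span_le]
      rintro x (rfl | rfl)
      · exact ht1
      · exact h2
    exact hne ((hmax.eq_of_le hp.ne_top hle).symm)
  set S := p.primeCompl
  have hsS : t - 1 ∈ S := hsub
  set I : Ideal R := Ideal.span {t - 1} with hI
  set v : I := ⟨t - 1, Ideal.mem_span_singleton_self _⟩ with hv
  set f : Localization S →ₗ[Localization S] LocalizedModule S I :=
    LinearMap.toSpanSingleton (Localization S) _ (LocalizedModule.mk v 1) with hf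
  have hbij : Function.Bijective f := by
    constructor
    · rw [injective_iff_map_eq_zero]
      intro x hx
      induction x using Localization.induction_on with
      | H y =>
      obtain ⟨a, s⟩ := y
      replace hx : Localization.mk a s • (LocalizedModule.mk v 1 : LocalizedModule S ↥I) = 0 := hx
      rw [LocalizedModule.mk_smul_mk, mul_one, show (0 : LocalizedModule S I) = LocalizedModule.mk 0 1 from (LocalizedModule.zero_mk 1).symm, LocalizedModule.mk_eq] at hx
      obtain ⟨u, hu⟩ := hx
      have hu' : (u : R) * (a * (t - 1)) = 0 := by
        have h := congrArg Subtype.val hu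
        simp only [hv, Submonoid.smul_def, SetLike.val_smul, smul_smul, smul_zero,
          smul_eq_mul, one_mul, mul_one, ZeroMemClass.coe_zero, OneMemClass.coe_one] at h
        linear_combination h
      rw [Localization.mk_eq_mk', IsLocalization.mk'_eq_zero_iff]
      exact ⟨u * ⟨t - 1, hsS⟩, by push_cast; linear_combination hu'⟩
    · intro z
      induction z using LocalizedModule.induction_on with
      | h m s =>
        obtain ⟨m, hm⟩ := m
        rw [hI, Ideal.mem_span_singleton] at hm
        obtain ⟨r, hr⟩ := hm
        refine ⟨Localization.mk r s, ?_⟩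
        rw [hf]
        simp only [LinearMap.toSpanSingleton_apply]
        rw [LocalizedModule.mk_smul_mk, mul_one]
        congr 1
        ext
        simp [hv, hr, mul_comm]
  exact ⟨(LinearEquiv.ofBijective f hbij).symm⟩
end

section
/- Let M be an R-module (R = ℤ[t]/(t²−1)) fitting in a split short exact sequence of R-modules 0 → J^a → M → I^b → 0, where I = (t−1) and J = (t+1). Then M is free of rank a + b as a ℤ-module, and for every prime 𝐩 ⊇ J of R with 𝐩 ≠ (J, 2), M_𝐩 ≅ (I_𝐩)^b as R_𝐩-modules. -/
open Polynomial

noncomputable abbrev I : Ideal R := Ideal.span {t - 1}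
noncomputable abbrev J : Ideal R := Ideal.span {t + 1}

noncomputable abbrev q : ℤ[X] →+* R := Ideal.Quotient.mk (Ideal.span ({X ^ 2 - 1} : Set ℤ[X]))

lemma ht1 : q (X - C 1) = t - 1 := by
  rw [map_sub, C_1, map_one]; rfl

lemma ht2 : q (X - C (-1)) = t + 1 := by
  rw [map_sub, map_neg, map_one]; show t - (-1) = t + 1; ring

lemma hqC (n : ℤ) : q (C n) = (n : R) := by
  rw [show (C n : ℤ[X]) = (n : ℤ[X]) by simp, map_intCast]

lemma mul_eval (f : ℤ[X]) (c d : ℤ) (h : (X - C d) * (X - C c) = X ^ 2 - 1) :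
    q f * q (X - C c) = ((f.eval d : ℤ) : R) * q (X - C c) := by
  obtain ⟨g, hg⟩ : (X - C d) ∣ (f - C (f.eval d)) := X_sub_C_dvd_sub_C_eval
  have h2 : q ((f - C (f.eval d)) * (X - C c)) = 0 :=
    Ideal.Quotient.eq_zero_iff_mem.2 (Ideal.mem_span_singleton.2 ⟨g, by rw [hg, ← h]; ring⟩)
  rw [map_mul, map_sub, hqC] at h2
  linear_combination h2

lemma cast_mul_eq_zero (c : ℤ) (n : ℤ) (h : (n : R) * q (X - C c) = 0) : n = 0 := by
  by_contra hn
  have h1 : q (C n * (X - C c)) = 0 := by rwa [map_mul, hqC]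
  have h2 : (X ^ 2 - 1 : ℤ[X]) ∣ C n * (X - C c) :=
    Ideal.mem_span_singleton.1 (Ideal.Quotient.eq_zero_iff_mem.1 h1)
  have hC : (C n : ℤ[X]) ≠ 0 := by simpa using hn
  have hX : (X - C c : ℤ[X]) ≠ 0 := X_sub_C_ne_zero c
  have h3 := Polynomial.natDegree_le_of_dvd h2 (mul_ne_zero hC hX)
  rw [Polynomial.natDegree_mul hC hX, natDegree_C, natDegree_X_sub_C] at h3
  have : (X ^ 2 - 1 : ℤ[X]).natDegree = 2 := by
    rw [show (1 : ℤ[X]) = C 1 by simp, natDegree_X_pow_sub_C]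
  omega

lemma span_zequiv (c d : ℤ) (h : (X - C d) * (X - C c) = X ^ 2 - 1) :
    Nonempty (↥(Ideal.span {q (X - C c)}) ≃+ ℤ) := by
  set u : R := q (X - C c) with hu
  have humem : u ∈ Ideal.span {u} := Ideal.subset_span rfl
  let g : ℤ →+ ↥(Ideal.span {u}) := zmultiplesHom _ ⟨u, humem⟩
  have hg : ∀ n : ℤ, (g n : R) = (n : R) * u := by
    intro n
    show ((n • (⟨u, humem⟩ : ↥(Ideal.span {u})) : ↥(Ideal.span {u})) : R) = (n : R) * u
    push_cast
    rw [zsmul_eq_mul]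
  have hinj : Function.Injective g := by
    intro m n hmn
    have : ((m - n : ℤ) : R) * u = 0 := by
      have := congrArg (fun z : ↥(Ideal.span {u}) => (z : R)) hmn
      simp only [hg] at this
      push_cast
      linear_combination this
    have := cast_mul_eq_zero c (m - n) this
    omega
  have hsurj : Function.Surjective g := by
    rintro ⟨x, hx⟩
    obtain ⟨r, hr⟩ := Ideal.mem_span_singleton'.1 hx
    obtain ⟨f, rfl⟩ := Ideal.Quotient.mk_surjective r
    refine ⟨f.eval d, Subtype.ext ?_⟩
    rw [hg, ← mul_eval f c d h, hr]
  exact ⟨(AddEquiv.ofBijective g ⟨hinj, hsurj⟩).symm⟩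

lemma hT : (t - 1) * (t + 1) = 0 := by
  have h : q ((X - C 1) * (X - C (-1))) = 0 := by
    refine Ideal.Quotient.eq_zero_iff_mem.2 ?_
    rw [show ((X : ℤ[X]) - C 1) * (X - C (-1)) = X ^ 2 - 1 by simp; ring]
    exact Ideal.subset_span rfl
  rwa [map_mul, ht1, ht2] at h

lemma parity (r : R) : r ∈ Ideal.span ({t + 1, 2} : Set R) ∨
    r - 1 ∈ Ideal.span ({t + 1, 2} : Set R) := by
  set S : Ideal R := Ideal.span ({t + 1, 2} : Set R) with hS
  have h2S : (2 : R) ∈ S := Ideal.subset_span (by right; rfl)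
  have htS : (t + 1 : R) ∈ S := Ideal.subset_span (by left; rfl)
  obtain ⟨f, rfl⟩ := Ideal.Quotient.mk_surjective r
  set n : ℤ := f.eval (-1) with hn
  have h1 : q f - (n : R) ∈ S := by
    obtain ⟨g, hg⟩ : (X - C (-1)) ∣ (f - C n) := X_sub_C_dvd_sub_C_eval
    have : q f - (n : R) = (t + 1) * q g := by
      rw [← ht2, ← map_mul, ← hg, map_sub, hqC]
    rw [this]
    exact Ideal.mul_mem_right _ _ htS
  rcases Int.even_or_odd n with ⟨m, hm⟩ | ⟨m, hm⟩
  · left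
    have hnS : (n : R) ∈ S := by
      rw [show (n : R) = (m : R) * 2 by rw [hm]; push_cast; ring]
      exact Ideal.mul_mem_left _ _ h2S
    have := S.add_mem h1 hnS
    simpa using this
  · right
    have hnS : (n : R) - 1 ∈ S := by
      rw [show (n : R) - 1 = (m : R) * 2 by rw [hm]; push_cast; ring]
      exact Ideal.mul_mem_left _ _ h2S
    have := S.add_mem h1 hnS
    rw [show Ideal.Quotient.mk _ f - ↑n + (↑n - 1) = q f - 1 by ring] at this
    exact this

lemma tsub_one_notin_p (p : Ideal R) [hp : p.IsPrime] (hJp : J ≤ p)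
    (hne : p ≠ Ideal.span {t + 1, 2}) : t - 1 ∉ p := by
  intro h1
  have htp : (t + 1 : R) ∈ p := hJp (Ideal.subset_span rfl)
  have h2p : (2 : R) ∈ p := by
    have := p.sub_mem htp h1
    rwa [show t + 1 - (t - 1) = 2 by ring] at this
  have hle : Ideal.span ({t + 1, 2} : Set R) ≤ p := by
    rw [Ideal.span_le]
    rintro x (rfl | rfl)
    · exact htp
    · exact h2p
  have hge : p ≤ Ideal.span ({t + 1, 2} : Set R) := by
    intro r hrp
    by_contra hrS
    rcases parity r with h | h
    · exact hrS h
    · have h1p : (1 : R) ∈ p := by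
        have := p.sub_mem hrp (hle h)
        rwa [show r - (r - 1) = 1 by ring] at this
      exact hp.ne_top ((Ideal.eq_top_iff_one p).2 h1p)
  exact hne (le_antisymm hge hle)

set_option synthInstance.maxHeartbeats 400000 in
lemma locJ_subsingleton (p : Ideal R) [p.IsPrime] (h1 : t - 1 ∈ p.primeCompl) :
    Subsingleton (LocalizedModule p.primeCompl ↥J) := by
  have hann : ∀ x : ↥J, (t - 1 : R) • x = 0 := by
    intro x
    obtain ⟨r, hr⟩ := Ideal.mem_span_singleton'.1 x.2
    refine Subtype.ext ?_
    show (t - 1 : R) • (x : R) = 0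
    rw [smul_eq_mul, ← hr]
    linear_combination r * hT
  refine subsingleton_of_forall_eq 0 fun z => ?_
  induction z using LocalizedModule.induction_on with
  | _ m s =>
    rw [← LocalizedModule.zero_mk s, LocalizedModule.mk_eq]
    refine ⟨⟨t - 1, h1⟩, ?_⟩
    simp only [Submonoid.smul_def, smul_zero]
    rw [smul_comm, hann, smul_zero]

noncomputable def upgradeEquiv {R₀ : Type*} [CommRing R₀] (S : Submonoid R₀) (A : Type*)
    [CommRing A] [Algebra R₀ A] [IsLocalization S A]
    {M N : Type*} [AddCommGroup M] [Module R₀ M] [Module A M] [IsScalarTower R₀ A M]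
    [AddCommGroup N] [Module R₀ N] [Module A N] [IsScalarTower R₀ A N]
    (e : M ≃ₗ[R₀] N) : M ≃ₗ[A] N :=
  LinearEquiv.ofLinear (e.toLinearMap.extendScalarsOfIsLocalization S A)
    (e.symm.toLinearMap.extendScalarsOfIsLocalization S A)
    (by ext x; simp) (by ext x; simp)

set_option maxHeartbeats 1000000 in
set_option synthInstance.maxHeartbeats 1000000 in
open TensorProduct in
/-- If M is an R-module fitting in a split short exact sequence
0 → J^a → M → I^b → 0 (so M ≅ J^a ⊕ I^b as R-modules), then M is a free
ℤ-module of rank a + b, and for every prime 𝐩 ⊇ J with 𝐩 ≠ (J, 2) one has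
M_𝐩 ≅ (I_𝐩)^b as R_𝐩-modules. -/
theorem split_extension_structure (a b : ℕ) (M : Type) [AddCommGroup M] [Module R M]
    (e : M ≃ₗ[R] ((Fin a → J) × (Fin b → I))) :
    Nonempty (M ≃ₗ[ℤ] (Fin (a + b) → ℤ)) ∧
    ∀ (p : Ideal R) [p.IsPrime], J ≤ p → p ≠ Ideal.span {t + 1, 2} →
      Nonempty ((LocalizedModule p.primeCompl M) ≃ₗ[Localization p.primeCompl]
        (Fin b → LocalizedModule p.primeCompl I)) := by
  constructor
  · have hIeq := span_zequiv 1 (-1) (by rw [map_neg, C_1]; ring)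
    rw [ht1] at hIeq
    obtain ⟨eI⟩ := hIeq
    have hJeq := span_zequiv (-1) 1 (by rw [map_neg, C_1]; ring)
    rw [ht2] at hJeq
    obtain ⟨eJ⟩ := hJeq
    exact ⟨((e.toAddEquiv.toIntLinearEquiv.trans
      (LinearEquiv.prodCongr (LinearEquiv.piCongrRight fun _ => eJ.toIntLinearEquiv)
        (LinearEquiv.piCongrRight fun _ => eI.toIntLinearEquiv))).trans
      (((LinearEquiv.sumArrowLequivProdArrow (Fin a) (Fin b) ℤ ℤ).symm).trans
        ((LinearEquiv.funCongrLeft ℤ ℤ finSumFinEquiv).symm)))⟩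
  · intro p hp hJp hne
    have h1 : t - 1 ∈ p.primeCompl := tsub_one_notin_p p hJp hne
    haveI hsub : Subsingleton (LocalizedModule p.primeCompl ↥J) := locJ_subsingleton p h1
    have bcM := IsLocalizedModule.isBaseChange p.primeCompl (Localization p.primeCompl)
      (LocalizedModule.mkLinearMap p.primeCompl M)
    have bcI := IsLocalizedModule.isBaseChange p.primeCompl (Localization p.primeCompl)
      (LocalizedModule.mkLinearMap p.primeCompl ↥I)
    have bcJ := IsLocalizedModule.isBaseChange p.primeCompl (Localization p.primeCompl)
      (LocalizedModule.mkLinearMap p.primeCompl ↥J)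
    haveI hsubAJ : Subsingleton ((Localization p.primeCompl) ⊗[R] ↥J) :=
      bcJ.equiv.toEquiv.subsingleton
    let E1 : LocalizedModule p.primeCompl M ≃ₗ[R] (Localization p.primeCompl) ⊗[R] M :=
      (bcM.equiv.restrictScalars R).symm
    let E2 : (Localization p.primeCompl) ⊗[R] M ≃ₗ[R]
        (Localization p.primeCompl) ⊗[R] ((Fin a → J) × (Fin b → I)) :=
      (LinearEquiv.baseChange R (Localization p.primeCompl) _ _ e).restrictScalars R
    let E3 := TensorProduct.prodRight R R (Localization p.primeCompl) (Fin a → ↥J) (Fin b → ↥I)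
    let E4 := LinearEquiv.prodCongr
      ((TensorProduct.piRight R (Localization p.primeCompl) (Localization p.primeCompl)
        (fun _ : Fin a => ↥J)).restrictScalars R)
      ((TensorProduct.piRight R (Localization p.primeCompl) (Localization p.primeCompl)
        (fun _ : Fin b => ↥I)).restrictScalars R)
    let E5 : ((Fin a → (Localization p.primeCompl) ⊗[R] ↥J) ×
        (Fin b → (Localization p.primeCompl) ⊗[R] ↥I)) ≃ₗ[R]
        (Fin b → (Localization p.primeCompl) ⊗[R] ↥I) :=
      LinearEquiv.ofLinear (LinearMap.snd R _ _) (LinearMap.prod 0 LinearMap.id)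
        (LinearMap.ext fun x => rfl)
        (LinearMap.ext fun x => Prod.ext (Subsingleton.elim _ _) rfl)
    let E6 : (Fin b → (Localization p.primeCompl) ⊗[R] ↥I) ≃ₗ[R]
        (Fin b → LocalizedModule p.primeCompl ↥I) :=
      LinearEquiv.piCongrRight fun _ => bcI.equiv.restrictScalars R
    have Y : LocalizedModule p.primeCompl M ≃ₗ[R] (Fin b → LocalizedModule p.primeCompl ↥I) :=
      (E1.trans (E2.trans (E3.trans (E4.trans (E5.trans E6)))))
    have X := upgradeEquiv (M := LocalizedModule p.primeCompl M)
      (N := Fin b → LocalizedModule p.primeCompl ↥I) p.primeCompl (Localization p.primeCompl) Y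
    exact ⟨X⟩
end
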